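/- arXiv:1204.4377 — 7 statements merged into one kernel-verified Lean document; each statement's English description precedes it below -/
import Mathlib

section
/- For any multiplicative characters A and B of F_q, the sum over all multiplicative characters χ of J(Aχ, Bχ̄)·χ(-1) equals 0. -/
noncomputable instance {F : Type*} [Field F] [Fintype F] : Fintype (MulChar F ℂ) :=
  Fintype.ofFinite _

lemma sum_mulChar_apply_eq_zero {F : Type*} [Field F] [Fintype F] {a : F} (ha : a ≠ 1) :
    ∑ χ : MulChar F ℂ, χ a = 0 := by
  by_cases hu : IsUnit a
  · have : NeZero (Monoid.exponent Fˣ) := ⟨Monoid.exponent_ne_zero_of_finite⟩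
    obtain ⟨χ₀, hχ₀⟩ := MulChar.exists_apply_ne_one_of_hasEnoughRootsOfUnity F ℂ ha
    have h : χ₀ a * ∑ χ : MulChar F ℂ, χ a = ∑ χ : MulChar F ℂ, χ a := by
      rw [Finset.mul_sum]
      exact Fintype.sum_equiv (Equiv.mulLeft χ₀) _ _
        (fun χ ↦ (MulChar.mul_apply χ₀ χ a).symm)
    have := sub_eq_zero.mpr h
    rw [← sub_one_mul] at this
    exact (mul_eq_zero.mp this).resolve_left (sub_ne_zero.mpr hχ₀)
  · exact Finset.sum_eq_zero fun χ _ ↦ χ.map_nonunit hu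

theorem sum_jacobiSum_eq_zero {F : Type*} [Field F] [Fintype F] (A B : MulChar F ℂ) :
    ∑ χ : MulChar F ℂ, jacobiSum (A * χ) (B * χ⁻¹) * χ (-1) = 0 := by
  simp only [jacobiSum, Finset.sum_mul]
  rw [Finset.sum_comm]
  refine Finset.sum_eq_zero fun t _ ↦ ?_
  have key : ∀ χ : MulChar F ℂ, (A * χ) t * (B * χ⁻¹) (1 - t) * χ (-1)
      = A t * B (1 - t) * χ (t * (1 - t)⁻¹ * (-1)) := by
    intro χ
    rw [MulChar.mul_apply, MulChar.mul_apply, MulChar.inv_apply' χ (1 - t), map_mul, map_mul]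
    ring
  simp only [key, ← Finset.mul_sum]
  rw [sum_mulChar_apply_eq_zero, mul_zero]
  rcases eq_or_ne t 1 with rfl | ht
  · simp
  · intro h
    have h1t : (1 - t) ≠ 0 := sub_ne_zero.mpr ht.symm
    have h3 : -t = 1 - t := by
      calc -t = t * (1 - t)⁻¹ * (-1) * (1 - t) := by field_simp
        _ = 1 * (1 - t) := by rw [h]
        _ = 1 - t := one_mul _
    exact one_ne_zero (by linear_combination -h3 : (1 : F) = 0)
end

section
/- For multiplicative characters A and B of F_q, (1/(q-1))·Σ_χ g(Aχ)·g(Bχ̄)·χ(-1), summed over all multiplicative characters χ, equals 0 if AB is nontrivial, and equals (q-1)·A(-1) if AB is trivial. -/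
open scoped Classical in
lemma sum_mulChar_apply_aux {F : Type*} [Field F] [Fintype F] (a : F) :
    ∑ χ : MulChar F ℂ, χ a = if a = 1 then ((Fintype.card F : ℂ) - 1) else 0 := by
  split_ifs with ha
  · subst ha
    simp only [map_one, Finset.sum_const, Finset.card_univ, nsmul_eq_mul, mul_one]
    rw [← Nat.card_eq_fintype_card, MulChar.card_eq_card_units_of_hasEnoughRootsOfUnity,
      Nat.card_eq_fintype_card, Fintype.card_units]
    rw [Nat.cast_sub Fintype.card_pos, Nat.cast_one]
  · obtain ⟨χ, hχ⟩ := MulChar.exists_apply_ne_one_of_hasEnoughRootsOfUnity F ℂ ha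
    refine eq_zero_of_mul_eq_self_left hχ ?_
    simp only [Finset.mul_sum, ← MulChar.mul_apply]
    exact Fintype.sum_bijective _ (Group.mulLeft_bijective χ) _ _ fun χ' ↦ rfl

open scoped Classical in
theorem sum_gaussSum_mul_gaussSum {F : Type*} [Field F] [Fintype F]
    (θ : AddChar F ℂ) (hθ : θ ≠ 1) (A B : MulChar F ℂ) :
    (1 / ((Fintype.card F : ℂ) - 1)) *
      ∑ χ : MulChar F ℂ, gaussSum (A * χ) θ * gaussSum (B * χ⁻¹) θ * χ (-1) =
    if A * B = 1 then ((Fintype.card F : ℂ) - 1) * A (-1) else 0 := by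
  have hq : (Fintype.card F : ℂ) - 1 ≠ 0 := by
    have h1 : 1 < Fintype.card F := Fintype.one_lt_card
    have : (Fintype.card F : ℂ) ≠ 1 := by exact_mod_cast h1.ne'
    exact sub_ne_zero.mpr this
  -- Step 1: expand each term as a double sum
  have expand : ∀ χ : MulChar F ℂ,
      gaussSum (A * χ) θ * gaussSum (B * χ⁻¹) θ * χ (-1) =
      ∑ y : F, ∑ x : F, A x * B y * (θ x * θ y) * χ (x * y⁻¹ * -1) := by
    intro χ
    rw [gaussSum, gaussSum, Finset.sum_mul_sum, Finset.sum_mul]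
    rw [Finset.sum_comm]
    refine Finset.sum_congr rfl fun y _ ↦ ?_
    rw [Finset.sum_mul]
    refine Finset.sum_congr rfl fun x _ ↦ ?_
    simp only [MulChar.mul_apply, MulChar.inv_apply' B y]
    rw [map_mul χ, map_mul χ, MulChar.inv_apply']
    ring
  simp only [expand]
  -- Step 2: swap the sums and apply orthogonality
  rw [Finset.sum_comm]
  have swap : ∀ y : F, ∑ χ : MulChar F ℂ, ∑ x : F, A x * B y * (θ x * θ y) * χ (x * y⁻¹ * -1)
      = A (-1) * MulChar.mul A B y * ((Fintype.card F : ℂ) - 1) := by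
    intro y
    rw [Finset.sum_comm]
    have : ∀ x : F, ∑ χ : MulChar F ℂ, A x * B y * (θ x * θ y) * χ (x * y⁻¹ * -1)
        = A x * B y * (θ x * θ y) *
          (if x * y⁻¹ * -1 = 1 then ((Fintype.card F : ℂ) - 1) else 0) := by
      intro x
      rw [← Finset.mul_sum, sum_mulChar_apply_aux]
    simp only [this]
    rcases eq_or_ne y 0 with rfl | hy
    · simp [MulChar.map_zero]
    · have key : ∀ x : F, x * y⁻¹ * -1 = 1 ↔ x = -y := by
        intro x
        constructor
        · intro h
          have : x * y⁻¹ = -1 := by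
            have := congrArg (· * (-1)) h
            simpa using this
          field_simp at this
          linear_combination this
        · rintro rfl
          field_simp
      simp only [key, mul_ite, mul_zero]
      rw [Finset.sum_ite_eq' Finset.univ (-y) (fun x ↦ A x * B y * (θ x * θ y) *
        ((Fintype.card F : ℂ) - 1))]
      simp only [Finset.mem_univ, if_true]
      have hA : A (-y) = A (-1) * A y := by
        rw [← map_mul]; ring_nf
      have hθ0 : θ (-y) * θ y = 1 := by
        rw [← AddChar.map_add_eq_mul]; simp
      rw [hA, hθ0, show MulChar.mul A B y = A y * B y from rfl]
      ring
  simp only [swap]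
  rw [← Finset.sum_mul, ← Finset.mul_sum]
  -- Step 3: evaluate ∑ y, (A*B) y
  have hsum : ∑ y : F, MulChar.mul A B y = if A * B = 1 then ((Fintype.card F : ℂ) - 1) else 0 := by
    split_ifs with hAB
    · have : MulChar.mul A B = (1 : MulChar F ℂ) := hAB
      rw [this]
      have := MulChar.sum_one_eq_card_units (R := F) (R' := ℂ)
      rw [this, Fintype.card_units, Nat.cast_sub Fintype.card_pos, Nat.cast_one]
    · exact MulChar.sum_eq_zero_of_ne_one hAB
  rw [hsum]
  split_ifs with hAB
  · field_simp
  · simp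
end

section
/- (Helversen-Pasotto) For multiplicative characters A, B, C, D of F_q: (1/(q-1))·Σ_χ g(Aχ)g(Bχ)g(Cχ̄)g(Dχ̄) = g(AC)g(AD)g(BC)g(BD)/g(ABCD) + q(q-1)·AB(-1)·δ(ABCD), where the sum is over all multiplicative characters χ and δ(χ) is 1 if χ is trivial and 0 otherwise. -/
open Finset
open scoped Classical

namespace HPaux

variable {F : Type*} [Field F] [Fintype F]

instance : NeZero (Monoid.exponent Fˣ) := ⟨Monoid.exponent_ne_zero_of_finite⟩

instance : HasEnoughRootsOfUnity ℂ (Monoid.exponent Fˣ) := by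
  have : NeZero ((Monoid.exponent Fˣ : ℂ)) := ⟨by exact_mod_cast (Monoid.exponent_ne_zero_of_finite (G := Fˣ))⟩
  infer_instance

lemma card_mulChar : Fintype.card (MulChar F ℂ) = Fintype.card F - 1 := by
  rw [← Nat.card_eq_fintype_card, MulChar.card_eq_card_units_of_hasEnoughRootsOfUnity,
    Nat.card_eq_fintype_card, Fintype.card_units]

lemma sum_char (a : F) :
    ∑ χ : MulChar F ℂ, χ a = if a = 1 then ((Fintype.card F : ℂ) - 1) else 0 := by
  rcases eq_or_ne a 1 with rfl | ha
  · simp only [MulChar.map_one, if_pos rfl, Finset.sum_const, card_univ, nsmul_eq_mul, mul_one,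
      card_mulChar]
    rw [Nat.cast_sub Fintype.card_pos, Nat.cast_one]
    simp
  · rw [if_neg ha]
    by_cases hu : IsUnit a
    · obtain ⟨χ₀, h₀⟩ := MulChar.exists_apply_ne_one_of_hasEnoughRootsOfUnity F ℂ ha
      have key : χ₀ a * ∑ χ : MulChar F ℂ, χ a = ∑ χ : MulChar F ℂ, χ a := by
        rw [Finset.mul_sum]
        calc ∑ χ : MulChar F ℂ, χ₀ a * χ a = ∑ χ : MulChar F ℂ, (χ₀ * χ) a := by
              simp [MulChar.mul_apply]
          _ = ∑ χ : MulChar F ℂ, χ a :=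
              Fintype.sum_equiv (Equiv.mulLeft χ₀) _ _ (fun χ => rfl)
      have h2 : (χ₀ a - 1) * ∑ χ : MulChar F ℂ, χ a = 0 := by linear_combination key
      rcases mul_eq_zero.mp h2 with h | h
      · exact absurd (sub_eq_zero.mp h) h₀
      · exact h
    · simp [MulChar.map_nonunit _ hu]


lemma orth (a b : F) :
    ∑ χ : MulChar F ℂ, χ a * χ⁻¹ b =
      if a = b ∧ a ≠ 0 then ((Fintype.card F : ℂ) - 1) else 0 := by
  have h : ∀ χ : MulChar F ℂ, χ a * χ⁻¹ b = χ (a * b⁻¹) := fun χ => by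
    rw [MulChar.inv_apply', ← map_mul]
  simp_rw [h, sum_char]
  rcases eq_or_ne b 0 with rfl | hb
  · simp
  · rcases eq_or_ne a b with rfl | hab
    · rw [if_pos (mul_inv_cancel₀ hb), if_pos ⟨rfl, hb⟩]
    · rw [if_neg, if_neg (by tauto)]
      rw [mul_inv_eq_one₀ hb]
      exact hab

lemma sum_units (f : F → ℂ) (h : f 0 = 0) : ∑ x : F, f x = ∑ u : Fˣ, f u := by
  have h2 : ∑ u : Fˣ, f u = ∑ x ∈ Finset.univ.erase (0 : F), f x := by
    refine Finset.sum_bij' (fun (u : Fˣ) _ => (u : F))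
      (fun x hx => Units.mk0 x (Finset.mem_erase.mp hx).1) ?_ ?_ ?_ ?_ ?_ <;>
      simp [Units.ne_zero]
  rw [h2, Finset.sum_erase _ h]

variable (θ : AddChar F ℂ)

lemma Gsum (χ : MulChar F ℂ) (c : F) :
    ∑ x : F, χ x * θ (c * x) =
      if c = 0 then (if χ = 1 then ((Fintype.card F : ℂ) - 1) else 0)
      else χ⁻¹ c * gaussSum χ θ := by
  rcases eq_or_ne c 0 with rfl | hc
  · rw [if_pos rfl]
    simp only [zero_mul, AddChar.map_zero_eq_one, mul_one]
    rcases eq_or_ne χ 1 with rfl | hχ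
    · rw [if_pos rfl, MulChar.sum_one_eq_card_units, Fintype.card_units,
        Nat.cast_sub Fintype.card_pos, Nat.cast_one]
    · rw [if_neg hχ, MulChar.sum_eq_zero_of_ne_one hχ]
  · rw [if_neg hc]
    have hu : IsUnit c := isUnit_iff_ne_zero.mpr hc
    have key := gaussSum_mulShift χ θ hu.unit
    have h2 : gaussSum χ (AddChar.mulShift θ hu.unit) = ∑ x : F, χ x * θ (c * x) := by
      simp [gaussSum, AddChar.mulShift_apply, hu.unit_spec]
    rw [h2, hu.unit_spec] at key
    have h3 : χ⁻¹ c * χ c = 1 := by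
      rw [← MulChar.mul_apply, MulChar.inv_mul, MulChar.one_apply hu]
    calc ∑ x : F, χ x * θ (c * x) = χ⁻¹ c * χ c * ∑ x : F, χ x * θ (c * x) := by
          rw [h3, one_mul]
      _ = χ⁻¹ c * gaussSum χ θ := by rw [mul_assoc, key]

omit [Fintype F] in
lemma sq1 (χ : MulChar F ℂ) : χ (-1) * χ (-1) = 1 := by
  rw [← map_mul, neg_mul_neg, one_mul, MulChar.map_one]

omit [Fintype F] in
lemma invneg (χ : MulChar F ℂ) : χ⁻¹ (-1) = χ (-1) := by
  rw [MulChar.inv_apply', inv_neg_one]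

variable {θ} (hθ : θ ≠ 1)
include hθ

lemma gauss_one : gaussSum (1 : MulChar F ℂ) θ = -1 := by
  have h0 : ∑ x : F, θ x = 0 := AddChar.sum_eq_zero_of_ne_one hθ
  rw [gaussSum, ← Finset.sum_erase_add _ _ (Finset.mem_univ (0 : F))]
  have h1 : ∀ x ∈ Finset.univ.erase (0 : F), (1 : MulChar F ℂ) x * θ x = θ x := by
    intro x hx
    rw [MulChar.one_apply (isUnit_iff_ne_zero.mpr (Finset.mem_erase.mp hx).1), one_mul]
  rw [Finset.sum_congr rfl h1, MulChar.map_zero, zero_mul, add_zero]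
  rw [← Finset.sum_erase_add _ _ (Finset.mem_univ (0 : F)), AddChar.map_zero_eq_one] at h0
  linear_combination h0

lemma gauss_ne_zero (χ : MulChar F ℂ) : gaussSum χ θ ≠ 0 := by
  rcases eq_or_ne χ 1 with rfl | hχ
  · rw [gauss_one hθ]; norm_num
  · exact gaussSum_ne_zero_of_nontrivial
      (by exact_mod_cast (Fintype.card_ne_zero (α := F))) hχ (AddChar.IsPrimitive.of_ne_one hθ)

lemma gmul {χ : MulChar F ℂ} (hχ : χ ≠ 1) :
    gaussSum χ θ * gaussSum χ⁻¹ θ = χ (-1) * (Fintype.card F : ℂ) := by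
  have h1 := gaussSum_mul_gaussSum_eq_card hχ (AddChar.IsPrimitive.of_ne_one hθ)
  have h2 := mul_gaussSum_inv_eq_gaussSum χ⁻¹ θ
  rw [invneg] at h2
  rw [← h2, mul_left_comm, h1]

end HPaux

open HPaux in
open scoped Classical in
theorem helversen_pasotto {F : Type*} [Field F] [Fintype F]
    (θ : AddChar F ℂ) (hθ : θ ≠ 1) (A B C D : MulChar F ℂ) :
    (1 / ((Fintype.card F : ℂ) - 1)) *
      ∑ χ : MulChar F ℂ,
        gaussSum (A * χ) θ * gaussSum (B * χ) θ * gaussSum (C * χ⁻¹) θ * gaussSum (D * χ⁻¹) θ =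
    gaussSum (A * C) θ * gaussSum (A * D) θ * gaussSum (B * C) θ * gaussSum (B * D) θ /
        gaussSum (A * B * C * D) θ +
      (Fintype.card F : ℂ) * ((Fintype.card F : ℂ) - 1) * (A * B) (-1) *
        (if A * B * C * D = 1 then 1 else 0) := by
  have hq1 : (Fintype.card F : ℂ) - 1 ≠ 0 :=
    sub_ne_zero.mpr (by exact_mod_cast Fintype.one_lt_card.ne')
  have hq0 : (Fintype.card F : ℂ) ≠ 0 := by exact_mod_cast Fintype.card_ne_zero
  have stepA : ∑ χ : MulChar F ℂ,
        gaussSum (A * χ) θ * gaussSum (B * χ) θ * gaussSum (C * χ⁻¹) θ * gaussSum (D * χ⁻¹) θ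
      = ((Fintype.card F : ℂ) - 1) * ∑ x : F, ∑ y : F, ∑ z : F, ∑ w : F,
          (if x * y = z * w ∧ x * y ≠ 0 then A x * B y * C z * D w * θ (x + y + z + w) else 0) := by
    have expand : ∀ χ : MulChar F ℂ,
        gaussSum (A * χ) θ * gaussSum (B * χ) θ * gaussSum (C * χ⁻¹) θ * gaussSum (D * χ⁻¹) θ
      = ∑ x : F, ∑ y : F, ∑ z : F, ∑ w : F,
          (A x * B y * C z * D w * θ (x + y + z + w)) * (χ (x * y) * χ⁻¹ (z * w)) := by
      intro χ
      rw [show gaussSum (A * χ) θ * gaussSum (B * χ) θ * gaussSum (C * χ⁻¹) θ *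
            gaussSum (D * χ⁻¹) θ
          = gaussSum (D * χ⁻¹) θ * gaussSum (C * χ⁻¹) θ * gaussSum (B * χ) θ *
            gaussSum (A * χ) θ by ring]
      simp only [gaussSum, Finset.sum_mul, Finset.mul_sum]
      refine Finset.sum_congr rfl fun x _ => Finset.sum_congr rfl fun y _ =>
        Finset.sum_congr rfl fun z _ => Finset.sum_congr rfl fun w _ => ?_
      simp only [MulChar.mul_apply]
      rw [map_mul χ, map_mul (χ⁻¹ : MulChar F ℂ), show x + y + z + w = x + (y + (z + w)) by ring,
        AddChar.map_add_eq_mul, AddChar.map_add_eq_mul, AddChar.map_add_eq_mul]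
      ring
    calc ∑ χ : MulChar F ℂ,
        gaussSum (A * χ) θ * gaussSum (B * χ) θ * gaussSum (C * χ⁻¹) θ * gaussSum (D * χ⁻¹) θ
        = ∑ χ : MulChar F ℂ, ∑ x : F, ∑ y : F, ∑ z : F, ∑ w : F,
            (A x * B y * C z * D w * θ (x + y + z + w)) * (χ (x * y) * χ⁻¹ (z * w)) :=
          Finset.sum_congr rfl fun χ _ => expand χ
      _ = ∑ x : F, ∑ y : F, ∑ z : F, ∑ w : F, ∑ χ : MulChar F ℂ,
            (A x * B y * C z * D w * θ (x + y + z + w)) * (χ (x * y) * χ⁻¹ (z * w)) := by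
          rw [Finset.sum_comm]
          refine Finset.sum_congr rfl fun x _ => ?_
          rw [Finset.sum_comm]
          refine Finset.sum_congr rfl fun y _ => ?_
          rw [Finset.sum_comm]
          refine Finset.sum_congr rfl fun z _ => ?_
          exact Finset.sum_comm
      _ = ∑ x : F, ∑ y : F, ∑ z : F, ∑ w : F,
            (A x * B y * C z * D w * θ (x + y + z + w)) *
              (if x * y = z * w ∧ x * y ≠ 0 then ((Fintype.card F : ℂ) - 1) else 0) := by
          simp only [← Finset.mul_sum, orth]
      _ = ((Fintype.card F : ℂ) - 1) * ∑ x : F, ∑ y : F, ∑ z : F, ∑ w : F,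
          (if x * y = z * w ∧ x * y ≠ 0 then A x * B y * C z * D w * θ (x + y + z + w) else 0) := by
          simp only [Finset.mul_sum]
          refine Finset.sum_congr rfl fun x _ => Finset.sum_congr rfl fun y _ =>
            Finset.sum_congr rfl fun z _ => Finset.sum_congr rfl fun w _ => ?_
          split_ifs <;> ring
  have stepB : (∑ x : F, ∑ y : F, ∑ z : F, ∑ w : F,
          (if x * y = z * w ∧ x * y ≠ 0 then A x * B y * C z * D w * θ (x + y + z + w) else 0))
      = ∑ u : Fˣ, (C ↑u * D ↑(u⁻¹)) * (∑ x : F, (A * C) x * θ ((1 + ↑u) * x)) *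
          (∑ y : F, (B * D) y * θ ((1 + (↑(u⁻¹) : F)) * y)) := by
    have hzw : ∀ u x y : Fˣ, (u * x)⁻¹ * (x * y) = u⁻¹ * y := fun u x y => by
      rw [mul_inv_rev, mul_mul_mul_comm, inv_mul_cancel, one_mul]
    calc (∑ x : F, ∑ y : F, ∑ z : F, ∑ w : F,
          (if x * y = z * w ∧ x * y ≠ 0 then A x * B y * C z * D w * θ (x + y + z + w) else 0))
        = ∑ x : Fˣ, ∑ y : Fˣ, ∑ z : Fˣ, ∑ w : Fˣ,
            (if (x : F) * y = (z : F) * w then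
              A x * B y * C z * D w * θ ((x : F) + y + z + w) else 0) := by
          rw [sum_units _ (by simp)]
          refine Finset.sum_congr rfl fun x _ => ?_
          rw [sum_units _ (by simp)]
          refine Finset.sum_congr rfl fun y _ => ?_
          rw [sum_units _ (by simp)]
          refine Finset.sum_congr rfl fun z _ => ?_
          rw [sum_units _ (by simp)]
          refine Finset.sum_congr rfl fun w _ => ?_
          exact if_congr (and_iff_left (mul_ne_zero (Units.ne_zero x) (Units.ne_zero y))) rfl rfl
      _ = ∑ x : Fˣ, ∑ y : Fˣ, ∑ z : Fˣ,
            A x * B y * C z * D ↑(z⁻¹ * (x * y)) *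
              θ ((x : F) + y + z + ↑(z⁻¹ * (x * y))) := by
          refine Finset.sum_congr rfl fun x _ => Finset.sum_congr rfl fun y _ =>
            Finset.sum_congr rfl fun z _ => ?_
          rw [Finset.sum_eq_single (z⁻¹ * (x * y))]
          · rw [if_pos]
            push_cast
            field_simp
          · intro b _ hb
            rw [if_neg]
            intro hcon
            apply hb
            have hz : (z : F) ≠ 0 := Units.ne_zero z
            refine Units.ext ?_
            push_cast
            field_simp
            linear_combination -hcon
          · intro h; exact absurd (Finset.mem_univ _) h
      _ = ∑ x : Fˣ, ∑ y : Fˣ, ∑ u : Fˣ,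
            A x * B y * C ↑(u * x) * D ↑(u⁻¹ * y) *
              θ ((x : F) + y + ↑(u * x) + ↑(u⁻¹ * y)) := by
          refine Finset.sum_congr rfl fun x _ => Finset.sum_congr rfl fun y _ => ?_
          rw [← Equiv.sum_comp (Equiv.mulRight x)
            (fun z : Fˣ => A x * B y * C z * D ↑(z⁻¹ * (x * y)) *
              θ ((x : F) + y + z + ↑(z⁻¹ * (x * y))))]
          refine Finset.sum_congr rfl fun u _ => ?_
          simp only [Equiv.coe_mulRight, hzw]
      _ = ∑ x : Fˣ, ∑ y : Fˣ, ∑ u : Fˣ,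
            (C ↑u * D ↑(u⁻¹)) * ((A * C) ↑x * θ ((1 + ↑u) * ↑x)) *
              ((B * D) ↑y * θ ((1 + (↑(u⁻¹) : F)) * ↑y)) := by
          refine Finset.sum_congr rfl fun x _ => Finset.sum_congr rfl fun y _ =>
            Finset.sum_congr rfl fun u _ => ?_
          push_cast
          rw [show (x : F) + y + ↑u * ↑x + (↑u)⁻¹ * ↑y
              = (1 + ↑u) * ↑x + (1 + (↑u)⁻¹) * ↑y by ring,
            AddChar.map_add_eq_mul, map_mul C, map_mul D, MulChar.mul_apply, MulChar.mul_apply]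
          ring
      _ = ∑ u : Fˣ, ∑ x : Fˣ, ∑ y : Fˣ,
            (C ↑u * D ↑(u⁻¹)) * ((A* C) ↑x * θ ((1 + ↑u) * ↑x)) *
              ((B * D) ↑y * θ ((1 + (↑(u⁻¹) : F)) * ↑y)) := by
          conv_lhs => enter [2, x]; rw [Finset.sum_comm]
          exact Finset.sum_comm
      _ = ∑ u : Fˣ, (C ↑u * D ↑(u⁻¹)) * (∑ x : F, (A * C) x * θ ((1 + ↑u) * x)) *
          (∑ y : F, (B * D) y * θ ((1 + (↑(u⁻¹) : F)) * y)) := by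
          refine Finset.sum_congr rfl fun u _ => ?_
          rw [sum_units (fun x : F => (A * C) x * θ ((1 + ↑u) * x))
              (by simp [MulChar.map_zero]),
            sum_units (fun y : F => (B * D) y * θ ((1 + (↑(u⁻¹) : F)) * y))
              (by simp [MulChar.map_zero])]
          simp only [← Finset.mul_sum, ← Finset.sum_mul]
  have stepC : (∑ u : Fˣ, (C ↑u * D ↑(u⁻¹)) * (∑ x : F, (A * C) x * θ ((1 + ↑u) * x)) *
          (∑ y : F, (B * D) y * θ ((1 + (↑(u⁻¹) : F)) * y)))
      = C (-1) * D (-1) * (if A * C = 1 then ((Fintype.card F : ℂ) - 1) else 0) *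
          (if B * D = 1 then ((Fintype.card F : ℂ) - 1) else 0)
        + gaussSum (A * C) θ * gaussSum (B * D) θ *
            ((B * C) (-1) * jacobiSum (B * C) (A * B * C * D)⁻¹) := by
    have key : ∀ u : Fˣ, u ≠ -1 →
        (C ↑u * D ↑(u⁻¹)) * ((A * C)⁻¹ (1 + ↑u) * (B * D)⁻¹ (1 + (↑(u⁻¹) : F)))
          = (B * C) ↑u * (A * B * C * D)⁻¹ (1 + ↑u) := by
      intro u hu
      have hu0 : (↑u : F) ≠ 0 := Units.ne_zero u
      have hv : (1 : F) + ↑u ≠ 0 := by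
        intro h
        apply hu
        refine Units.ext ?_
        rw [Units.coe_neg_one]
        linear_combination h
      rw [Units.val_inv_eq_inv_val]
      have h1 : (1 + ((↑u)⁻¹ : F)) = (1 + ↑u) * (↑u)⁻¹ := by field_simp; ring
      rw [h1, MulChar.inv_apply', MulChar.inv_apply', MulChar.inv_apply',
        mul_inv, inv_inv]
      simp only [MulChar.mul_apply, map_mul]
      have hD : D ((↑u)⁻¹) * D ↑u = 1 := by
        rw [← map_mul, inv_mul_cancel₀ hu0, MulChar.map_one]
      linear_combination (C ↑u * A ((1 + (↑u : F))⁻¹) * C ((1 + (↑u : F))⁻¹) *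
        B ((1 + (↑u : F))⁻¹) * B ↑u * D ((1 + (↑u : F))⁻¹)) * hD
    simp only [Gsum]
    rw [← Finset.sum_erase_add _ _ (Finset.mem_univ (-1 : Fˣ))]
    have hm1 : ((-1 : Fˣ) : F) = -1 := Units.coe_neg_one
    have hm1' : ((((-1 : Fˣ)⁻¹ : Fˣ)) : F) = -1 := by
      rw [Units.val_inv_eq_inv_val, hm1, inv_neg_one]
    have hterm : (C ↑(-1 : Fˣ) * D ↑((-1 : Fˣ)⁻¹)) *
        (if (1 : F) + ↑(-1 : Fˣ) = 0 then (if A * C = 1 then ((Fintype.card F : ℂ) - 1) else 0)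
          else (A * C)⁻¹ (1 + ↑(-1 : Fˣ)) * gaussSum (A * C) θ) *
        (if (1 : F) + ↑((-1 : Fˣ)⁻¹) = 0 then
            (if B * D = 1 then ((Fintype.card F : ℂ) - 1) else 0)
          else (B * D)⁻¹ (1 + ↑((-1 : Fˣ)⁻¹)) * gaussSum (B * D) θ)
        = C (-1) * D (-1) * (if A * C = 1 then ((Fintype.card F : ℂ) - 1) else 0) *
          (if B * D = 1 then ((Fintype.card F : ℂ) - 1) else 0) := by
      rw [hm1, hm1', show (1 : F) + -1 = 0 from by ring]
      rw [if_pos rfl, if_pos rfl]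
    rw [hterm]
    have herase : ∑ u ∈ Finset.univ.erase (-1 : Fˣ), (C ↑u * D ↑(u⁻¹)) *
        (if (1 : F) + ↑u = 0 then (if A * C = 1 then ((Fintype.card F : ℂ) - 1) else 0)
          else (A * C)⁻¹ (1 + ↑u) * gaussSum (A * C) θ) *
        (if (1 : F) + ↑(u⁻¹) = 0 then (if B * D = 1 then ((Fintype.card F : ℂ) - 1) else 0)
          else (B * D)⁻¹ (1 + ↑(u⁻¹)) * gaussSum (B * D) θ)
        = gaussSum (A * C) θ * gaussSum (B * D) θ *
            ∑ u ∈ Finset.univ.erase (-1 : Fˣ), (B * C) ↑u * (A * B * C * D)⁻¹ (1 + ↑u) := by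
      rw [Finset.mul_sum]
      refine Finset.sum_congr rfl fun u hu => ?_
      have hu1 : u ≠ -1 := (Finset.mem_erase.mp hu).1
      have hu0 : (↑u : F) ≠ 0 := Units.ne_zero u
      have hv : (1 : F) + ↑u ≠ 0 := by
        intro h
        apply hu1
        refine Units.ext ?_
        rw [Units.coe_neg_one]
        linear_combination h
      have hv' : (1 : F) + ↑(u⁻¹) ≠ 0 := by
        rw [Units.val_inv_eq_inv_val]
        have h1 : (1 + ((↑u)⁻¹ : F)) = (1 + ↑u) * (↑u)⁻¹ := by field_simp; ring
        rw [h1]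
        exact mul_ne_zero hv (inv_ne_zero hu0)
      rw [if_neg hv, if_neg hv']
      calc (C ↑u * D ↑(u⁻¹)) * ((A * C)⁻¹ (1 + ↑u) * gaussSum (A * C) θ) *
            ((B * D)⁻¹ (1 + ↑(u⁻¹)) * gaussSum (B * D) θ)
          = gaussSum (A * C) θ * gaussSum (B * D) θ *
            ((C ↑u * D ↑(u⁻¹)) * ((A * C)⁻¹ (1 + ↑u) * (B * D)⁻¹ (1 + (↑(u⁻¹) : F)))) := by
            ring
        _ = gaussSum (A * C) θ * gaussSum (B * D) θ *
            ((B * C) ↑u * (A * B * C * D)⁻¹ (1 + ↑u)) := by rw [key u hu1]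
    rw [herase]
    have hfull : ∑ u ∈ Finset.univ.erase (-1 : Fˣ), (B * C) ↑u * (A * B * C * D)⁻¹ (1 + ↑u)
        = ∑ u : Fˣ, (B * C) ↑u * (A * B * C * D)⁻¹ (1 + ↑u) := by
      refine Finset.sum_erase _ ?_
      rw [hm1, show (1 : F) + -1 = 0 by ring, MulChar.map_zero, mul_zero]
    rw [hfull]
    have hsumF : ∑ u : Fˣ, (B * C) ↑u * (A * B * C * D)⁻¹ (1 + ↑u)
        = ∑ x : F, (B * C) x * (A * B * C * D)⁻¹ (1 + x) :=
      (sum_units (fun x : F => (B * C) x * (A * B * C * D)⁻¹ (1 + x))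
        (by simp [MulChar.map_zero])).symm
    rw [hsumF]
    have hS : ∑ x : F, (B * C) x * (A * B * C * D)⁻¹ (1 + x)
        = (B * C) (-1) * jacobiSum (B * C) (A * B * C * D)⁻¹ := by
      rw [jacobiSum, Finset.mul_sum, ← Equiv.sum_comp (Equiv.neg F)
        (fun x => (B * C) (-1) * ((B * C) x * (A * B * C * D)⁻¹ (1 - x)))]
      refine Finset.sum_congr rfl fun x _ => ?_
      simp only [Equiv.neg_apply]
      rw [show (1 : F) - -x = 1 + x by ring, show (-x : F) = -1 * x by ring, map_mul]
      linear_combination (-((B * C) x * (A * B * C * D)⁻¹ (1 + x))) * sq1 (B * C)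
    rw [hS]
    ring
  rw [stepA, ← mul_assoc, one_div, inv_mul_cancel₀ hq1, one_mul, stepB, stepC]
  have hprim := AddChar.IsPrimitive.of_ne_one hθ
  have gne : ∀ χ : MulChar F ℂ, gaussSum χ θ ≠ 0 := fun χ => gauss_ne_zero hθ χ
  have hsplit : A * B * C * D = (A * C) * (B * D) := by rw [mul_assoc, mul_mul_mul_comm]
  have hsplit2 : A * B * C * D = (B * C) * (A * D) :=
    MulChar.ext' fun a => by simp only [MulChar.mul_apply]; ring
  by_cases hE : A * B * C * D = 1
  · rw [if_pos hE, mul_one]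
    by_cases hBC : B * C = 1
    · have hAD : A * D = 1 := by rw [hsplit2, hBC, one_mul] at hE; exact hE
      have hJ : jacobiSum (B * C) (A * B * C * D)⁻¹ = (Fintype.card F : ℂ) - 2 := by
        rw [hE, inv_one, hBC, jacobiSum_one_one]
      have hC : C = B⁻¹ := eq_inv_of_mul_eq_one_right hBC
      have hD : D = A⁻¹ := eq_inv_of_mul_eq_one_right hAD
      rw [hJ, hBC, hAD, hE, gauss_one hθ, MulChar.one_apply (isUnit_one.neg)]
      by_cases hAC : A * C = 1
      · have hBD : B * D = 1 := by rw [hsplit, hAC, one_mul] at hE; exact hE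
        have hAB : B = A := by
          have h1 : C = A⁻¹ := eq_inv_of_mul_eq_one_right hAC
          rw [h1] at hC
          calc B = B⁻¹⁻¹ := (inv_inv B).symm
            _ = A⁻¹⁻¹ := by rw [← hC]
            _ = A := inv_inv A
        rw [if_pos hAC, if_pos hBD, hAC, hBD, gauss_one hθ, hC, hD, hAB, invneg,
          MulChar.mul_apply]
        linear_combination (((Fintype.card F : ℂ) - 1) ^ 2 -
          (Fintype.card F : ℂ) * ((Fintype.card F : ℂ) - 1)) * sq1 A
      · have hBD : B * D ≠ 1 := by
          intro h
          rw [hsplit, h, mul_one] at hE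
          exact hAC hE
        have hACBD : A * C = (B * D)⁻¹ :=
          eq_inv_of_mul_eq_one_left (by rw [← hsplit]; exact hE)
        have hg : gaussSum (B * D) θ * gaussSum (B * D)⁻¹ θ
            = (B * D) (-1) * (Fintype.card F : ℂ) := gmul hθ hBD
        have hPQ : (B * D) (-1) = (A * B) (-1) := by
          rw [hD]
          simp only [MulChar.mul_apply, invneg]
          ring
        rw [hPQ] at hg
        rw [if_neg hAC, if_neg hBD, hACBD, mul_zero, zero_add]
        linear_combination ((Fintype.card F : ℂ) - 1) * hg
    · have hADBC : A * D = (B * C)⁻¹ :=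
        eq_inv_of_mul_eq_one_right (a := B * C) (b := A * D) (by rw [← hsplit2]; exact hE)
      have hJ : jacobiSum (B * C) (A * B * C * D)⁻¹ = -1 := by
        rw [hE, inv_one, jacobiSum_comm, jacobiSum_one_nontrivial hBC]
      have hg : gaussSum (B * C) θ * gaussSum (B * C)⁻¹ θ = (B * C) (-1) * (Fintype.card F : ℂ) :=
        gmul hθ hBC
      rw [hJ, hE, gauss_one hθ, hADBC]
      by_cases hBD : B * D = 1
      · have hAC : A * C = 1 := by rw [hsplit, hBD, mul_one] at hE; exact hE
        have hCA : C = A⁻¹ := eq_inv_of_mul_eq_one_right hAC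
        have hDB : D = B⁻¹ := eq_inv_of_mul_eq_one_right hBD
        have e1 : C (-1) = A (-1) := by rw [hCA, invneg]
        have e2 : D (-1) = B (-1) := by rw [hDB, invneg]
        simp only [MulChar.mul_apply] at hg ⊢
        rw [if_pos hAC, if_pos hBD, hAC, hBD, gauss_one hθ, e1, e2]
        rw [e1] at hg
        linear_combination hg
      · have hAC : A * C ≠ 1 := by
          intro h
          rw [hsplit, h, one_mul] at hE
          exact hBD hE
        have hACBD : A * C = (B * D)⁻¹ :=
          eq_inv_of_mul_eq_one_left (by rw [← hsplit]; exact hE)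
        have hg2 : gaussSum (B * D) θ * gaussSum (B * D)⁻¹ θ
            = (B * D) (-1) * (Fintype.card F : ℂ) := gmul hθ hBD
        have hEm1 : A (-1) * B (-1) * C (-1) * D (-1) = 1 := by
          have h := congrArg (fun χ : MulChar F ℂ => χ (-1)) hE
          simpa only [MulChar.mul_apply, MulChar.one_apply (isUnit_one.neg)] using h
        have e4 : C (-1) * D (-1) = A (-1) * B (-1) := by
          calc C (-1) * D (-1)
              = (A (-1) * A (-1)) * ((B (-1) * B (-1)) * (C (-1) * D (-1))) := by
                rw [sq1 A, sq1 B]; ring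
            _ = A (-1) * B (-1) * (A (-1) * B (-1) * C (-1) * D (-1)) := by ring
            _ = A (-1) * B (-1) := by rw [hEm1, mul_one]
        rw [if_neg hAC, if_neg hBD, hACBD, mul_zero, zero_add]
        simp only [MulChar.mul_apply] at hg hg2 ⊢
        linear_combination (gaussSum (B * D)⁻¹ θ * gaussSum (B * D) θ) * hg +
          (B (-1) * C (-1) * ((Fintype.card F : ℂ) - 1)) * hg2 +
          ((Fintype.card F : ℂ) * ((Fintype.card F : ℂ) - 1) * (B (-1) * B (-1))) * e4 +
          ((Fintype.card F : ℂ) * ((Fintype.card F : ℂ) - 1) * (A (-1) * B (-1))) * sq1 B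
  · rw [if_neg hE, mul_zero, add_zero]
    have hd : C (-1) * D (-1) * (if A * C = 1 then ((Fintype.card F : ℂ) - 1) else 0) *
        (if B * D = 1 then ((Fintype.card F : ℂ) - 1) else 0) = 0 := by
      rcases eq_or_ne (A * C) 1 with h1 | h1
      · rcases eq_or_ne (B * D) 1 with h2 | h2
        · exact absurd (by rw [hsplit, h1, h2, one_mul]) hE
        · rw [if_neg h2, mul_zero]
      · rw [if_neg h1, mul_zero, zero_mul]
    rw [hd, zero_add]
    by_cases hAD : A * D = 1
    · have hBCE : B * C = A * B * C * D := by rw [hsplit2, hAD, mul_one]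
      have hBCne : B * C ≠ 1 := by rw [hBCE]; exact hE
      have hJ : jacobiSum (B * C) (A * B * C * D)⁻¹ = -(B * C) (-1) := by
        rw [← hBCE, jacobiSum_nontrivial_inv hBCne]
      rw [hJ, hAD, gauss_one hθ, ← hBCE]
      rw [eq_div_iff (gne (B * C))]
      linear_combination (-(gaussSum (A * C) θ * gaussSum (B * D) θ * gaussSum (B * C) θ)) *
        sq1 (B * C)
    · have hne : B * C * (A * B * C * D)⁻¹ = (A * D)⁻¹ := by
        rw [hsplit2, mul_inv, mul_inv_cancel_left]
      have hADinv : (A * D)⁻¹ ≠ 1 := inv_ne_one.mpr hAD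
      have hJg : gaussSum ((A * D)⁻¹) θ * jacobiSum (B * C) (A * B * C * D)⁻¹
          = gaussSum (B * C) θ * gaussSum ((A * B * C * D)⁻¹) θ := by
        have h := jacobiSum_mul_nontrivial (χ := B * C) (φ := (A * B * C * D)⁻¹)
          (by rw [hne]; exact hADinv) θ
        rwa [hne] at h
      have hg1 : gaussSum (A * B * C * D) θ * gaussSum ((A * B * C * D)⁻¹) θ
          = (A * B * C * D) (-1) * (Fintype.card F : ℂ) := gmul hθ hE
      have hg2 : gaussSum (A * D) θ * gaussSum ((A * D)⁻¹) θ
          = (A * D) (-1) * (Fintype.card F : ℂ) := gmul hθ hAD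
      have hstr : (B * C) (-1) * ((A * B * C * D) (-1) * (A * D) (-1)) = 1 := by
        have h2 : (B * C) (-1) * ((A * B * C * D) (-1) * (A * D) (-1))
            = (A * B * C * D) (-1) * (A * B * C * D) (-1) := by
          simp only [MulChar.mul_apply]; ring
        rw [h2, sq1]
      have h5 : ((A * D) (-1) * (jacobiSum (B * C) (A * B * C * D)⁻¹ *
            gaussSum (A * B * C * D) θ)) * (Fintype.card F : ℂ)
          = (gaussSum (A * D) θ * gaussSum (B * C) θ * (A * B * C * D) (-1)) *
            (Fintype.card F : ℂ) := by
        linear_combination (-(jacobiSum (B * C) (A * B * C * D)⁻¹ *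
            gaussSum (A * B * C * D) θ)) * hg2 +
          (gaussSum (A * D) θ * gaussSum (A * B * C * D) θ) * hJg +
          (gaussSum (A * D) θ * gaussSum (B * C) θ) * hg1
      have h6 : (A * D) (-1) * (jacobiSum (B * C) (A * B * C * D)⁻¹ *
            gaussSum (A * B * C * D) θ)
          = gaussSum (A * D) θ * gaussSum (B * C) θ * (A * B * C * D) (-1) :=
        mul_right_cancel₀ hq0 h5
      rw [eq_div_iff (gne (A * B * C * D))]
      linear_combination (gaussSum (A * C) θ * gaussSum (B * D) θ * (B * C) (-1) *
          (A * D) (-1)) * h6 +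
        (gaussSum (A * C) θ * gaussSum (B * D) θ * gaussSum (B * C) θ *
          gaussSum (A * D) θ) * hstr +
        (-(gaussSum (A * C) θ * gaussSum (B * D) θ * (B * C) (-1) *
          (jacobiSum (B * C) (A * B * C * D)⁻¹ * gaussSum (A * B * C * D) θ))) * sq1 (A * D)
end

section
/- For multiplicative characters A, B, C of F_q with AB ≠ C, the sum (1/(q-1))·Σ_χ [g(Aχ)/g(A)]·[g(Bχ)/g(B)]·[g((Cχ)¯)/g(C̄)]·g(χ̄), over all multiplicative characters χ, equals g(AC̄)g(BC̄)/(g(C̄)g(ABC̄)). -/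
set_option linter.unusedSectionVars false
set_option linter.unusedVariables false
set_option maxHeartbeats 2000000

section Aux
open Finset AddChar


variable {F : Type*} [Field F] [Fintype F] [DecidableEq F] {θ : AddChar F ℂ}


private lemma sum_units_eq (f : F → ℂ) (hf : f 0 = 0) : ∑ x : F, f x = ∑ u : Fˣ, f u := by
  have h1 : ∑ u : Fˣ, f u = ∑ x : {a : F // a ≠ 0}, f x :=
    Equiv.sum_comp (unitsEquivNeZero (G₀ := F)) (fun x : {a : F // a ≠ 0} => f x)
  have h2 : ∑ x ∈ (univ : Finset F) \ {0}, f x = ∑ x : {a : F // a ≠ 0}, f x := by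
    apply Finset.sum_subtype
    intro x
    simp
  rw [h1, ← h2, Finset.sum_eq_sum_sdiff_singleton_add (mem_univ (0 : F)), hf, add_zero]

private lemma gaussSum_units (χ : MulChar F ℂ) (θ : AddChar F ℂ) :
    gaussSum χ θ = ∑ u : Fˣ, χ u * θ u := by
  rw [gaussSum]
  exact sum_units_eq (fun x => χ x * θ x) (by simp [MulChar.map_zero])

private lemma hasEnough : HasEnoughRootsOfUnity ℂ (Monoid.exponent Fˣ) := by
  haveI : NeZero ((Monoid.exponent Fˣ : ℕ) : ℂ) :=
    ⟨Nat.cast_ne_zero.mpr Monoid.exponent_ne_zero_of_finite⟩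
  infer_instance

private lemma sum_mulChar (a : F) :
    ∑ χ : MulChar F ℂ, χ a = if a = 1 then ((Fintype.card F : ℂ) - 1) else 0 := by
  haveI := hasEnough (F := F)
  split_ifs with ha
  · subst ha
    simp only [map_one]
    rw [Finset.sum_const, nsmul_eq_mul, mul_one, Finset.card_univ, ← Nat.card_eq_fintype_card,
      MulChar.card_eq_card_units_of_hasEnoughRootsOfUnity F ℂ, Nat.card_eq_fintype_card,
      Fintype.card_units, Nat.cast_sub Fintype.card_pos, Nat.cast_one]
  · by_cases hu : IsUnit a
    · obtain ⟨χ₀, hχ₀⟩ := MulChar.exists_apply_ne_one_of_hasEnoughRootsOfUnity F ℂ ha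
      refine eq_zero_of_mul_eq_self_left hχ₀ ?_
      rw [Finset.mul_sum]
      simp only [← MulChar.mul_apply]
      exact Fintype.sum_bijective _ (Group.mulLeft_bijective χ₀) _ _ fun χ' ↦ rfl
    · simp only [MulChar.map_nonunit _ hu, Finset.sum_const_zero]

private lemma twist (hθ : θ ≠ 1) {ψ : MulChar F ℂ} (hψ : ψ ≠ 1) (c : F) :
    ∑ z : Fˣ, ψ z * θ ((z : F) * c) = ψ⁻¹ c * gaussSum ψ θ := by
  by_cases hc : c = 0
  · subst hc
    simp only [mul_zero, map_zero_eq_one, mul_one]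
    rw [← sum_units_eq (fun x => ψ x) (MulChar.map_zero ψ), MulChar.sum_eq_zero_of_ne_one hψ,
      MulChar.map_zero, zero_mul]
  · set cu : Fˣ := Units.mk0 c hc with hcu
    have h1 := gaussSum_mulShift ψ θ cu
    have h2 : gaussSum ψ (mulShift θ cu) = ∑ z : Fˣ, ψ z * θ ((z : F) * c) := by
      rw [gaussSum]
      rw [sum_units_eq (fun x => ψ x * (mulShift θ cu) x)
        (by simp [MulChar.map_zero])]
      refine Finset.sum_congr rfl fun u _ => ?_
      rw [mulShift_apply, mul_comm (cu : F)]
      rfl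
    rw [← h2]
    have h3 : ψ⁻¹ c * (ψ (cu : F) * gaussSum ψ (mulShift θ cu)) =
        ψ⁻¹ c * gaussSum ψ θ := by rw [h1]
    rw [← h3, ← mul_assoc, MulChar.inv_apply', ← map_mul]
    have hvc : ((cu : F)) = c := rfl
    rw [hvc, inv_mul_cancel₀ hc, map_one, one_mul]

private lemma sum_jac (χ φ : MulChar F ℂ) :
    ∑ a : Fˣ, χ (a : F) * φ (1 + (a : F)) = χ (-1 : F) * jacobiSum χ φ := by
  have h0 : jacobiSum χ φ = ∑ u : Fˣ, χ (u : F) * φ (1 - (u : F)) := by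
    rw [jacobiSum]
    exact sum_units_eq (fun x => χ x * φ (1 - x)) (by simp [MulChar.map_zero])
  have h1 : ∑ u : Fˣ, χ (u : F) * φ (1 - (u : F)) =
      ∑ u : Fˣ, χ (-(u : F)) * φ (1 + (u : F)) := by
    refine (Equiv.sum_comp (Equiv.neg Fˣ) (fun u : Fˣ => χ (u : F) * φ (1 - (u : F)))).symm.trans ?_
    refine Finset.sum_congr rfl fun u _ => ?_
    simp only [Equiv.neg_apply, Units.val_neg, sub_neg_eq_add]
  rw [h0, h1]
  rw [Finset.mul_sum]
  refine Finset.sum_congr rfl fun u _ => ?_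
  rw [show -(u : F) = (-1 : F) * u by ring, map_mul]
  have hs : χ (-1 : F) * χ (-1) = 1 := by rw [← map_mul]; norm_num
  linear_combination (-(χ (u : F) * φ (1 + (u : F)))) * hs


private lemma swap2 {ι κ : Type*} [Fintype ι] [Fintype κ] (g : ι → κ → ℂ) :
    (∑ a : ι, ∑ b : κ, g a b) = ∑ b : κ, ∑ a : ι, g a b := Finset.sum_comm

private lemma sum4_rev {ι : Type*} [Fintype ι] (f : ι → ι → ι → ι → ℂ) :
    (∑ a : ι, ∑ b : ι, ∑ c : ι, ∑ d : ι, f a b c d)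
      = ∑ d : ι, ∑ c : ι, ∑ b : ι, ∑ a : ι, f a b c d := by
  calc (∑ a : ι, ∑ b : ι, ∑ c : ι, ∑ d : ι, f a b c d)
      = ∑ b : ι, ∑ a : ι, ∑ c : ι, ∑ d : ι, f a b c d := swap2 _
    _ = ∑ b : ι, ∑ c : ι, ∑ a : ι, ∑ d : ι, f a b c d :=
        sum_congr rfl fun b _ => swap2 _
    _ = ∑ b : ι, ∑ c : ι, ∑ d : ι, ∑ a : ι, f a b c d :=
        sum_congr rfl fun b _ => sum_congr rfl fun c _ => swap2 _
    _ = ∑ c : ι, ∑ b : ι, ∑ d : ι, ∑ a : ι, f a b c d := swap2 _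
    _ = ∑ c : ι, ∑ d : ι, ∑ b : ι, ∑ a : ι, f a b c d :=
        sum_congr rfl fun c _ => swap2 _
    _ = ∑ d : ι, ∑ c : ι, ∑ b : ι, ∑ a : ι, f a b c d := swap2 _

private lemma swap5 {ι κ : Type*} [Fintype ι] [Fintype κ] (t : κ → ι → ι → ι → ι → ℂ) :
    (∑ χ : κ, ∑ x : ι, ∑ y : ι, ∑ z : ι, ∑ w : ι, t χ x y z w)
      = ∑ x : ι, ∑ y : ι, ∑ z : ι, ∑ w : ι, ∑ χ : κ, t χ x y z w := by
  rw [Finset.sum_comm]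
  refine sum_congr rfl fun x _ => ?_
  rw [Finset.sum_comm]
  refine sum_congr rfl fun y _ => ?_
  rw [Finset.sum_comm]
  refine sum_congr rfl fun z _ => ?_
  rw [Finset.sum_comm]

private lemma rot3 {ι : Type*} [Fintype ι] (t : ι → ι → ι → ℂ) :
    (∑ x : ι, ∑ y : ι, ∑ z : ι, t x y z) = ∑ z : ι, ∑ x : ι, ∑ y : ι, t x y z := by
  calc (∑ x : ι, ∑ y : ι, ∑ z : ι, t x y z)
      = ∑ x : ι, ∑ z : ι, ∑ y : ι, t x y z := sum_congr rfl fun x _ => swap2 _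
    _ = ∑ z : ι, ∑ x : ι, ∑ y : ι, t x y z := swap2 _

private lemma big (hθ : θ ≠ 1) (A B C : MulChar F ℂ) (hψ : A * B * C⁻¹ ≠ 1) :
    ∑ χ : MulChar F ℂ,
        gaussSum (A * χ) θ * gaussSum (B * χ) θ * gaussSum (C * χ)⁻¹ θ * gaussSum χ⁻¹ θ =
      ((Fintype.card F : ℂ) - 1) * (gaussSum (A * B * C⁻¹) θ *
        ((A (-1 : F) * jacobiSum A (A * B * C⁻¹)⁻¹) *
          (B (-1 : F) * jacobiSum B (A * B * C⁻¹)⁻¹))) := by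
  have hch : ∀ (χ : MulChar F ℂ) (x y z w : Fˣ),
      χ ((x : F)) * χ (y : F) * (χ⁻¹ (z : F) * χ⁻¹ (w : F)) =
        χ ((x * y * (z * w)⁻¹ : Fˣ) : F) := by
    intro χ x y z w
    rw [MulChar.inv_apply', MulChar.inv_apply', ← map_mul, ← map_mul, ← map_mul]
    congr 1
    push_cast
    ring
  have hstep1 : ∀ χ : MulChar F ℂ,
      gaussSum (A * χ) θ * gaussSum (B * χ) θ * gaussSum (C * χ)⁻¹ θ * gaussSum χ⁻¹ θ =
      ∑ x : Fˣ, ∑ y : Fˣ, ∑ z : Fˣ, ∑ w : Fˣ,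
        (A (x : F) * B (y : F) * C⁻¹ (z : F) *
          (θ (x : F) * θ (y : F) * θ (z : F) * θ (w : F))) *
          χ ((x * y * (z * w)⁻¹ : Fˣ) : F) := by
    intro χ
    rw [show (C * χ)⁻¹ = C⁻¹ * χ⁻¹ from mul_inv C χ]
    rw [gaussSum_units (A * χ) θ, gaussSum_units (B * χ) θ, gaussSum_units (C⁻¹ * χ⁻¹) θ,
      gaussSum_units χ⁻¹ θ]
    simp only [Finset.sum_mul, Finset.mul_sum]
    rw [sum4_rev (fun (x y z w : Fˣ) => (A (x : F) * B (y : F) * C⁻¹ (z : F) *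
          (θ (x : F) * θ (y : F) * θ (z : F) * θ (w : F))) *
          χ ((x * y * (z * w)⁻¹ : Fˣ) : F))]
    refine sum_congr rfl fun w _ => sum_congr rfl fun z _ => sum_congr rfl fun y _ =>
      sum_congr rfl fun x _ => ?_
    rw [MulChar.mul_apply, MulChar.mul_apply, MulChar.mul_apply, ← hch χ x y z w]
    ring
  have hcond : ∀ x y z w : Fˣ, (x * y * (z * w)⁻¹ = 1) ↔ w = z⁻¹ * (x * y) := by
    intro x y z w
    rw [mul_inv_eq_one, eq_inv_mul_iff_mul_eq]
    exact eq_comm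
  set q1 : ℂ := (Fintype.card F : ℂ) - 1 with hq1
  set ψ : MulChar F ℂ := A * B * C⁻¹ with hψdef
  calc (∑ χ : MulChar F ℂ,
        gaussSum (A * χ) θ * gaussSum (B * χ) θ * gaussSum (C * χ)⁻¹ θ * gaussSum χ⁻¹ θ)
      = ∑ χ : MulChar F ℂ, ∑ x : Fˣ, ∑ y : Fˣ, ∑ z : Fˣ, ∑ w : Fˣ,
          (A (x : F) * B (y : F) * C⁻¹ (z : F) *
            (θ (x : F) * θ (y : F) * θ (z : F) * θ (w : F))) *
            χ ((x * y * (z * w)⁻¹ : Fˣ) : F) := sum_congr rfl fun χ _ => hstep1 χ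
    _ = ∑ x : Fˣ, ∑ y : Fˣ, ∑ z : Fˣ, ∑ w : Fˣ, ∑ χ : MulChar F ℂ,
          (A (x : F) * B (y : F) * C⁻¹ (z : F) *
            (θ (x : F) * θ (y : F) * θ (z : F) * θ (w : F))) *
            χ ((x * y * (z * w)⁻¹ : Fˣ) : F) :=
        swap5 (fun (χ : MulChar F ℂ) (x y z w : Fˣ) => (A (x : F) * B (y : F) * C⁻¹ (z : F) *
            (θ (x : F) * θ (y : F) * θ (z : F) * θ (w : F))) *
            χ ((x * y * (z * w)⁻¹ : Fˣ) : F))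
    _ = ∑ x : Fˣ, ∑ y : Fˣ, ∑ z : Fˣ,
          (A (x : F) * B (y : F) * C⁻¹ (z : F) *
            (θ (x : F) * θ (y : F) * θ (z : F) * θ ((z⁻¹ * (x * y) : Fˣ) : F))) * q1 := by
        refine sum_congr rfl fun x _ => sum_congr rfl fun y _ => sum_congr rfl fun z _ => ?_
        simp only [← Finset.mul_sum, sum_mulChar, Units.val_eq_one, hcond]
        simp only [mul_ite, mul_zero, Finset.sum_ite_eq', mem_univ, if_true]
        rfl
    _ = ∑ z : Fˣ, ∑ x : Fˣ, ∑ y : Fˣ,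
          (A (x : F) * B (y : F) * C⁻¹ (z : F) *
            (θ (x : F) * θ (y : F) * θ (z : F) * θ ((z⁻¹ * (x * y) : Fˣ) : F))) * q1 :=
        rot3 _
    _ = ∑ z : Fˣ, ∑ a : Fˣ, ∑ b : Fˣ,
          q1 * ((A (a : F) * B (b : F)) *
            (ψ (z : F) * θ ((z : F) * ((1 + (a : F)) * (1 + (b : F)))))) := by
        refine sum_congr rfl fun z _ => ?_
        rw [← Equiv.sum_comp (Equiv.mulLeft z) (fun x => ∑ y : Fˣ,
          (A (x : F) * B (y : F) * C⁻¹ (z : F) *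
            (θ (x : F) * θ (y : F) * θ (z : F) * θ ((z⁻¹ * (x * y) : Fˣ) : F))) * q1)]
        refine sum_congr rfl fun a _ => ?_
        rw [← Equiv.sum_comp (Equiv.mulLeft z) (fun y =>
          (A ((Equiv.mulLeft z a : Fˣ) : F) * B (y : F) * C⁻¹ (z : F) *
            (θ ((Equiv.mulLeft z a : Fˣ) : F) * θ (y : F) * θ (z : F) *
              θ ((z⁻¹ * ((Equiv.mulLeft z a : Fˣ) * y) : Fˣ) : F))) * q1)]
        refine sum_congr rfl fun b _ => ?_
        simp only [Equiv.coe_mulLeft]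
        have hw : (z⁻¹ * ((z * a) * (z * b)) : Fˣ) = z * (a * b) := by
          group
          rw [mul_comm a z]
        rw [hw]
        have hθ4 : θ (((z * a : Fˣ)) : F) * θ (((z * b : Fˣ)) : F) * θ ((z : F)) *
            θ (((z * (a * b) : Fˣ)) : F) =
            θ ((z : F) * ((1 + (a : F)) * (1 + (b : F)))) := by
          rw [← map_add_eq_mul, ← map_add_eq_mul, ← map_add_eq_mul]
          congr 1
          push_cast
          ring
        rw [hθ4]
        have hA : A (((z * a : Fˣ)) : F) = A (z : F) * A (a : F) := by
          rw [Units.val_mul, map_mul]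
        have hB : B (((z * b : Fˣ)) : F) = B (z : F) * B (b : F) := by
          rw [Units.val_mul, map_mul]
        have hψz : ψ (z : F) = A (z : F) * B (z : F) * C⁻¹ (z : F) := by
          rw [hψdef, MulChar.mul_apply, MulChar.mul_apply]
        rw [hA, hB, hψz]
        ring
    _ = ∑ a : Fˣ, ∑ b : Fˣ, ∑ z : Fˣ,
          q1 * ((A (a : F) * B (b : F)) *
            (ψ (z : F) * θ ((z : F) * ((1 + (a : F)) * (1 + (b : F)))))) := (rot3 _).symm
    _ = ∑ a : Fˣ, ∑ b : Fˣ,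
          q1 * ((A (a : F) * B (b : F)) * (ψ⁻¹ ((1 + (a : F)) * (1 + (b : F))) *
            gaussSum ψ θ)) := by
        refine sum_congr rfl fun a _ => sum_congr rfl fun b _ => ?_
        rw [← Finset.mul_sum, ← Finset.mul_sum, twist hθ hψ ((1 + (a : F)) * (1 + (b : F)))]
    _ = q1 * (gaussSum ψ θ *
          ((∑ a : Fˣ, A (a : F) * ψ⁻¹ (1 + (a : F))) *
            (∑ b : Fˣ, B (b : F) * ψ⁻¹ (1 + (b : F))))) := by
        rw [Finset.sum_mul_sum]
        simp only [Finset.mul_sum]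
        refine sum_congr rfl fun a _ => sum_congr rfl fun b _ => ?_
        rw [map_mul]
        ring
    _ = q1 * (gaussSum ψ θ *
          ((A (-1 : F) * jacobiSum A ψ⁻¹) * (B (-1 : F) * jacobiSum B ψ⁻¹))) := by
        rw [sum_jac A ψ⁻¹, sum_jac B ψ⁻¹]



variable {F : Type*} [Field F] [Fintype F] [DecidableEq F] {θ : AddChar F ℂ}

private lemma gaussSum_one_eq (hθ : θ ≠ 1) : gaussSum (1 : MulChar F ℂ) θ = -1 := by
  rw [gaussSum, Finset.sum_eq_sum_sdiff_singleton_add (mem_univ (0 : F)),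
    MulChar.map_zero, zero_mul, add_zero]
  have h1 : ∀ x ∈ (univ : Finset F) \ {0}, (1 : MulChar F ℂ) x * θ x = θ x := by
    intro x hx
    simp only [mem_sdiff, mem_singleton] at hx
    rw [MulChar.one_apply (isUnit_iff_ne_zero.mpr hx.2), one_mul]
  rw [Finset.sum_congr rfl h1]
  have h2 : ∑ x : F, θ x = ∑ x ∈ (univ : Finset F) \ {0}, θ x + θ 0 :=
    Finset.sum_eq_sum_sdiff_singleton_add (mem_univ (0 : F)) _
  rw [AddChar.sum_eq_zero_of_ne_one hθ, map_zero_eq_one] at h2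
  linear_combination -h2

private lemma gauss_ne_zero (hθ : θ ≠ 1) (χ : MulChar F ℂ) : gaussSum χ θ ≠ 0 := by
  by_cases hχ : χ = 1
  · rw [hχ, gaussSum_one_eq hθ]; norm_num
  · exact gaussSum_ne_zero_of_nontrivial (Nat.cast_ne_zero.mpr Fintype.card_ne_zero) hχ
      (IsPrimitive.of_ne_one hθ)

private lemma mulchar_neg_one_inv (χ : MulChar F ℂ) : χ⁻¹ (-1 : F) = χ (-1) := by
  rw [MulChar.inv_apply', inv_neg, inv_one]

private lemma mulchar_neg_one_sq (χ : MulChar F ℂ) : χ (-1 : F) * χ (-1) = 1 := by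
  rw [← map_mul, neg_mul_neg, one_mul, map_one]

private lemma gauss_refl (hθ : θ ≠ 1) {χ : MulChar F ℂ} (hχ : χ ≠ 1) :
    gaussSum χ θ * gaussSum χ⁻¹ θ = χ (-1) * (Fintype.card F : ℂ) := by
  have h1 := gaussSum_mul_gaussSum_eq_card hχ (IsPrimitive.of_ne_one hθ)
  have h2 := mul_gaussSum_inv_eq_gaussSum χ⁻¹ θ
  rw [← h2, mulchar_neg_one_inv]
  linear_combination χ (-1 : F) * h1

private lemma key (hθ : θ ≠ 1) {φ : MulChar F ℂ} (hφ : φ ≠ 1) (χ : MulChar F ℂ) :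
    χ (-1 : F) * jacobiSum χ φ⁻¹ * gaussSum φ θ = gaussSum χ θ * gaussSum (χ⁻¹ * φ) θ := by
  by_cases hc : χ * φ⁻¹ = 1
  · have hcφ : χ = φ := by rwa [mul_inv_eq_one] at hc
    subst hcφ
    have h1 : χ⁻¹ * χ = 1 := inv_mul_cancel χ
    rw [jacobiSum_nontrivial_inv hφ, h1, gaussSum_one_eq hθ]
    linear_combination (-(gaussSum χ θ)) * mulchar_neg_one_sq χ
  · have e1 := jacobiSum_mul_nontrivial hc θ
    have e2 := gauss_refl hθ hφ
    have e3 : gaussSum (χ * φ⁻¹) θ * gaussSum (χ⁻¹ * φ) θ =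
        (χ * φ⁻¹) (-1 : F) * (Fintype.card F : ℂ) := by
      have h := gauss_refl hθ hc
      rwa [show (χ * φ⁻¹)⁻¹ = χ⁻¹ * φ by rw [mul_inv, inv_inv]] at h
    have e4 : (χ * φ⁻¹) (-1 : F) = χ (-1) * φ (-1) := by
      rw [MulChar.mul_apply, mulchar_neg_one_inv]
    have e5 : gaussSum φ⁻¹ θ * gaussSum φ θ = φ (-1) * (Fintype.card F : ℂ) := by
      rw [mul_comm]; exact e2
    apply mul_left_cancel₀ (gauss_ne_zero hθ (χ * φ⁻¹))
    calc gaussSum (χ * φ⁻¹) θ * (χ (-1 : F) * jacobiSum χ φ⁻¹ * gaussSum φ θ)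
        = χ (-1 : F) * (gaussSum (χ * φ⁻¹) θ * jacobiSum χ φ⁻¹) * gaussSum φ θ := by ring
      _ = χ (-1 : F) * gaussSum χ θ * (gaussSum φ⁻¹ θ * gaussSum φ θ) := by rw [e1]; ring
      _ = χ (-1 : F) * gaussSum χ θ * (φ (-1) * (Fintype.card F : ℂ)) := by rw [e5]
      _ = gaussSum χ θ * ((χ * φ⁻¹) (-1 : F) * (Fintype.card F : ℂ)) := by rw [e4]; ring
      _ = gaussSum (χ * φ⁻¹) θ * (gaussSum χ θ * gaussSum (χ⁻¹ * φ) θ) := by rw [← e3]; ring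


private lemma assemble {F : Type*} [Field F] [Fintype F] [DecidableEq F]
    (θ : AddChar F ℂ) (hθ : θ ≠ 1) (A B C : MulChar F ℂ)
    (big' : ∑ χ : MulChar F ℂ,
        gaussSum (A * χ) θ * gaussSum (B * χ) θ * gaussSum (C * χ)⁻¹ θ * gaussSum χ⁻¹ θ =
      ((Fintype.card F : ℂ) - 1) * (gaussSum (A * B * C⁻¹) θ *
        ((A (-1 : F) * jacobiSum A (A * B * C⁻¹)⁻¹) *
          (B (-1 : F) * jacobiSum B (A * B * C⁻¹)⁻¹))))
    (kA : A (-1 : F) * jacobiSum A (A * B * C⁻¹)⁻¹ * gaussSum (A * B * C⁻¹) θ =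
      gaussSum A θ * gaussSum (B * C⁻¹) θ)
    (kB : B (-1 : F) * jacobiSum B (A * B * C⁻¹)⁻¹ * gaussSum (A * B * C⁻¹) θ =
      gaussSum B θ * gaussSum (A * C⁻¹) θ)
    (gA : gaussSum A θ ≠ 0) (gB : gaussSum B θ ≠ 0) (gC : gaussSum C⁻¹ θ ≠ 0)
    (gψ : gaussSum (A * B * C⁻¹) θ ≠ 0) :
    (1 / ((Fintype.card F : ℂ) - 1)) *
      ∑ χ : MulChar F ℂ,
        (gaussSum (A * χ) θ / gaussSum A θ) * (gaussSum (B * χ) θ / gaussSum B θ) *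
          (gaussSum (C * χ)⁻¹ θ / gaussSum C⁻¹ θ) * gaussSum χ⁻¹ θ =
    gaussSum (A * C⁻¹) θ * gaussSum (B * C⁻¹) θ /
      (gaussSum C⁻¹ θ * gaussSum (A * B * C⁻¹) θ) := by
  have hq1 : ((Fintype.card F : ℂ) - 1) ≠ 0 := by
    have h1 : (Fintype.card F : ℂ) ≠ 1 := by exact_mod_cast Fintype.one_lt_card.ne'
    exact sub_ne_zero.mpr h1
  have hD : ∀ χ : MulChar F ℂ,
      (gaussSum (A * χ) θ / gaussSum A θ) * (gaussSum (B * χ) θ / gaussSum B θ) *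
          (gaussSum (C * χ)⁻¹ θ / gaussSum C⁻¹ θ) * gaussSum χ⁻¹ θ =
      (gaussSum (A * χ) θ * gaussSum (B * χ) θ * gaussSum (C * χ)⁻¹ θ * gaussSum χ⁻¹ θ) /
        (gaussSum A θ * gaussSum B θ * gaussSum C⁻¹ θ) := fun χ => by ring
  rw [Finset.sum_congr rfl fun χ _ => hD χ, ← Finset.sum_div, big']
  have kk : (A (-1 : F) * jacobiSum A (A * B * C⁻¹)⁻¹) *
      (B (-1 : F) * jacobiSum B (A * B * C⁻¹)⁻¹) *
      (gaussSum (A * B * C⁻¹) θ * gaussSum (A * B * C⁻¹) θ) =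
      (gaussSum A θ * gaussSum (B * C⁻¹) θ) * (gaussSum B θ * gaussSum (A * C⁻¹) θ) := by
    linear_combination (B (-1 : F) * jacobiSum B (A * B * C⁻¹)⁻¹ *
      gaussSum (A * B * C⁻¹) θ) * kA + (gaussSum A θ * gaussSum (B * C⁻¹) θ) * kB
  rw [div_mul_div_comm, one_mul, div_eq_div_iff
    (mul_ne_zero hq1 (mul_ne_zero (mul_ne_zero gA gB) gC)) (mul_ne_zero gC gψ)]
  linear_combination (((Fintype.card F : ℂ) - 1) * gaussSum C⁻¹ θ) * kk

end Aux

theorem gauss_analogue_sum {F : Type*} [Field F] [Fintype F]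
    (θ : AddChar F ℂ) (hθ : θ ≠ 1) (A B C : MulChar F ℂ) (h : A * B ≠ C) :
    (1 / ((Fintype.card F : ℂ) - 1)) *
      ∑ χ : MulChar F ℂ,
        (gaussSum (A * χ) θ / gaussSum A θ) * (gaussSum (B * χ) θ / gaussSum B θ) *
          (gaussSum (C * χ)⁻¹ θ / gaussSum C⁻¹ θ) * gaussSum χ⁻¹ θ =
    gaussSum (A * C⁻¹) θ * gaussSum (B * C⁻¹) θ /
      (gaussSum C⁻¹ θ * gaussSum (A * B * C⁻¹) θ) := by
  classical
  have hψ : A * B * C⁻¹ ≠ 1 := fun hh => h (by rwa [mul_inv_eq_one] at hh)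
  have kA := key hθ hψ A
  have kB := key hθ hψ B
  rw [show A⁻¹ * (A * B * C⁻¹) = B * C⁻¹ by group] at kA
  rw [show B⁻¹ * (A * B * C⁻¹) = A * C⁻¹ by rw [mul_comm A B]; group] at kB
  exact assemble θ hθ A B C (big hθ A B C hψ) kA kB (gauss_ne_zero hθ A)
    (gauss_ne_zero hθ B) (gauss_ne_zero hθ C⁻¹) (gauss_ne_zero hθ (A * B * C⁻¹))
end

section
/- For multiplicative characters A, B, C of F_q in the degenerate case A = B = C = ε: 3F2*(ε,ε,ε; ε,ε | 1)_q = -q³ + q² + q + 1. -/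
/-- The finite field hypergeometric function `ₙ₊₁Fₙ*` of McCarthy. -/
noncomputable def hypF {F : Type*} [Field F] [Fintype F] (θ : AddChar F ℂ) {n : ℕ}
    (A : Fin (n + 1) → MulChar F ℂ) (B : Fin n → MulChar F ℂ) (x : F) : ℂ :=
  (1 / ((Fintype.card F : ℂ) - 1)) *
    ∑ χ : MulChar F ℂ,
      (∏ i, gaussSum (A i * χ) θ / gaussSum (A i) θ) *
        (∏ j, gaussSum (B j * χ)⁻¹ θ / gaussSum (B j)⁻¹ θ) *
        gaussSum χ⁻¹ θ * (χ (-1)) ^ (n + 1) * χ x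

/-- Degenerate case `A = B = C = ε` of the `₃F₂*` evaluation. -/
theorem hypF_3F2_all_trivial {F : Type*} [Field F] [Fintype F]
    (θ : AddChar F ℂ) (hθ : θ ≠ 1) :
    hypF θ ![(1 : MulChar F ℂ), 1, 1] ![1, 1] (1 : F) =
      -(Fintype.card F : ℂ) ^ 3 + (Fintype.card F : ℂ) ^ 2 + (Fintype.card F : ℂ) + 1 := by
  classical
  have hq2 : 2 ≤ Fintype.card F := Fintype.one_lt_card
  set q : ℂ := (Fintype.card F : ℂ) with hqdef
  -- Gauss sum of the trivial character is -1
  have hsum : ∑ x : F, θ x = 0 := AddChar.sum_eq_zero_iff_ne_zero.mpr hθ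
  have hg1 : gaussSum (1 : MulChar F ℂ) θ = -1 := by
    have h1 : gaussSum (1 : MulChar F ℂ) θ = ∑ x ∈ Finset.univ.erase (0 : F), θ x := by
      rw [gaussSum, ← Finset.sum_erase (a := (0 : F)) _ (by simp [MulChar.map_zero])]
      refine Finset.sum_congr rfl fun x hx => ?_
      rw [MulChar.one_apply (isUnit_iff_ne_zero.mpr (Finset.ne_of_mem_erase hx)), one_mul]
    rw [h1, Finset.sum_erase_eq_sub (Finset.mem_univ (0 : F)), hsum, AddChar.map_zero_eq_one]
    ring
  have hprim : θ.IsPrimitive := AddChar.IsPrimitive.of_ne_one hθ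
  have key : ∀ χ : MulChar F ℂ, χ ≠ 1 →
      gaussSum χ θ * gaussSum χ⁻¹ θ = χ (-1) * q := by
    intro χ hχ
    have h := mul_gaussSum_inv_eq_gaussSum χ⁻¹ θ
    rw [← h, mul_left_comm, gaussSum_mul_gaussSum_eq_card hχ hprim]
    have hinv : χ⁻¹ (-1) = χ (-1) := by
      rw [MulChar.inv_apply', inv_neg, inv_one]
    rw [hinv, hqdef]
  -- the summand
  set f : MulChar F ℂ → ℂ := fun χ =>
      (∏ i, gaussSum ((![(1 : MulChar F ℂ), 1, 1]) i * χ) θ /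
        gaussSum ((![(1 : MulChar F ℂ), 1, 1]) i) θ) *
        (∏ j, gaussSum ((![(1 : MulChar F ℂ), 1]) j * χ)⁻¹ θ /
          gaussSum ((![(1 : MulChar F ℂ), 1]) j)⁻¹ θ) *
        gaussSum χ⁻¹ θ * (χ (-1)) ^ (2 + 1) * χ (1 : F) with hf
  have hf' : ∀ χ : MulChar F ℂ,
      f χ = (gaussSum χ θ / (-1)) ^ 3 * (gaussSum χ⁻¹ θ / (-1)) ^ 2 *
        gaussSum χ⁻¹ θ * (χ (-1)) ^ 3 := by
    intro χ
    simp only [hf, Fin.prod_univ_three, Fin.prod_univ_two, Matrix.cons_val_zero,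
      Matrix.cons_val_one, Matrix.head_cons, Matrix.cons_val_two, Matrix.tail_cons, Matrix.head_fin_const, one_mul, inv_one, hg1,
      map_one]
    ring
  have hftriv : f 1 = -1 := by
    rw [hf' 1, inv_one, hg1]
    have : (1 : MulChar F ℂ) (-1) = 1 :=
      MulChar.one_apply (isUnit_iff_ne_zero.mpr (by norm_num))
    rw [this]
    ring
  have hfnt : ∀ χ : MulChar F ℂ, χ ≠ 1 → f χ = -q ^ 3 := by
    intro χ hχ
    have hsq : χ (-1) * χ (-1) = 1 := by
      rw [← map_mul]; norm_num
    calc f χ = -((gaussSum χ θ * gaussSum χ⁻¹ θ) ^ 3 * (χ (-1)) ^ 3) := by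
          rw [hf' χ]; ring
      _ = -((χ (-1) * q) ^ 3 * (χ (-1)) ^ 3) := by rw [key χ hχ]
      _ = -((χ (-1) * χ (-1)) ^ 3 * q ^ 3) := by ring
      _ = -q ^ 3 := by rw [hsq]; ring
  -- cardinality of the character group
  have hcard : Fintype.card (MulChar F ℂ) = Fintype.card F - 1 := by
    have : NeZero (Monoid.exponent Fˣ) := ⟨Monoid.exponent_ne_zero_of_finite⟩
    rw [← Nat.card_eq_fintype_card, MulChar.card_eq_card_units_of_hasEnoughRootsOfUnity,
      Nat.card_eq_fintype_card, Fintype.card_units]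
  -- put the sum together
  have herase : (Finset.univ.erase (1 : MulChar F ℂ)).card = Fintype.card F - 2 := by
    rw [Finset.card_erase_of_mem (Finset.mem_univ _), Finset.card_univ, hcard]
    omega
  have hsumf : ∑ χ : MulChar F ℂ, f χ = -1 + (Fintype.card F - 2 : ℕ) * (-q ^ 3) := by
    rw [← Finset.add_sum_erase Finset.univ f (Finset.mem_univ (1 : MulChar F ℂ)), hftriv,
      Finset.sum_congr rfl fun χ hχ => hfnt χ (Finset.ne_of_mem_erase hχ),
      Finset.sum_const, herase, nsmul_eq_mul]
  have hne : q - 1 ≠ 0 := by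
    rw [hqdef, sub_ne_zero]
    exact_mod_cast (by omega : Fintype.card F ≠ 1)
  have hcast : ((Fintype.card F - 2 : ℕ) : ℂ) = q - 2 := by
    rw [hqdef]; push_cast [Nat.cast_sub hq2]; ring
  have : hypF θ ![(1 : MulChar F ℂ), 1, 1] ![1, 1] (1 : F) =
      (1 / (q - 1)) * ∑ χ : MulChar F ℂ, f χ := rfl
  rw [this, hsumf, hcast]
  field_simp
  ring
end

section
/- For q odd with quadratic character φ, in the degenerate case A = ε and B = C = φ: 3F2*(ε,φ,φ; φ,φ | 1)_q = (-q² + 2q + 1)/q. -/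
/-- Degenerate case `A = ε`, `B = C = φ` (the quadratic character) of the `₃F₂*` evaluation. -/
theorem hypF_3F2_quadratic {F : Type*} [Field F] [Fintype F]
    (θ : AddChar F ℂ) (hθ : θ ≠ 1) (hq : Odd (Fintype.card F))
    (φ : MulChar F ℂ) (hφ : φ ^ 2 = 1) (hφ' : φ ≠ 1) :
    hypF θ ![(1 : MulChar F ℂ), φ, φ] ![φ, φ] (1 : F) =
      (-(Fintype.card F : ℂ) ^ 2 + 2 * (Fintype.card F : ℂ) + 1) / (Fintype.card F : ℂ) := by
  classical
  have hprim : θ.IsPrimitive := AddChar.IsPrimitive.of_ne_one hθ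
  have hq3 : 3 ≤ Fintype.card F := by
    rcases hq with ⟨k, hk⟩
    have h2 : 1 < Fintype.card F := Fintype.one_lt_card
    omega
  have hq0 : (Fintype.card F : ℂ) ≠ 0 := Nat.cast_ne_zero.mpr (by omega)
  have hq1 : (Fintype.card F : ℂ) - 1 ≠ 0 :=
    sub_ne_zero_of_ne (by exact_mod_cast (show Fintype.card F ≠ 1 by omega))
  have sq1 : ∀ χ : MulChar F ℂ, χ (-1) * χ (-1) = 1 := by
    intro χ; rw [← map_mul, neg_mul_neg, one_mul, map_one]
  have neg_inv : ∀ χ : MulChar F ℂ, χ⁻¹ (-1) = χ (-1) := by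
    intro χ
    rw [MulChar.inv_apply_eq_inv', inv_eq_of_mul_eq_one_right (sq1 χ)]
  have hφinv : φ⁻¹ = φ := inv_eq_of_mul_eq_one_right (by rw [← sq, hφ])
  have hφφ : φ * φ = 1 := by rw [← sq, hφ]
  have pair : ∀ χ : MulChar F ℂ, χ ≠ 1 →
      gaussSum χ θ * gaussSum χ⁻¹ θ = χ (-1) * (Fintype.card F : ℂ) := by
    intro χ hχ
    have h1 := gaussSum_mul_gaussSum_eq_card hχ hprim
    have h2 := mul_gaussSum_inv_eq_gaussSum χ⁻¹ θ
    rw [neg_inv χ] at h2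
    linear_combination χ (-1) * h1 - gaussSum χ θ * h2
  have hgφ0 : gaussSum φ θ ≠ 0 := gaussSum_ne_zero_of_nontrivial (by exact_mod_cast hq0) hφ' hprim
  have hgφ2 : gaussSum φ θ * gaussSum φ θ = φ (-1) * (Fintype.card F : ℂ) := by
    have := pair φ hφ'
    rwa [hφinv] at this
  have hsum0 : ∑ x : F, θ x = 0 :=
    AddChar.sum_eq_zero_iff_ne_zero.mpr (by rwa [← AddChar.one_eq_zero])
  have hg1 : gaussSum (1 : MulChar F ℂ) θ = -1 := by
    have h : ∀ x : F, (1 : MulChar F ℂ) x * θ x = θ x - (if x = 0 then 1 else 0) := by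
      intro x
      by_cases h : x = 0
      · simp [h, MulChar.map_zero]
      · simp [h, MulChar.one_apply (isUnit_iff_ne_zero.mpr h)]
    rw [gaussSum]
    rw [Finset.sum_congr rfl fun x _ => h x, Finset.sum_sub_distrib, hsum0,
      Finset.sum_ite_eq' Finset.univ (0 : F) (fun _ => (1 : ℂ))]
    simp
  have hg1ne : gaussSum (1 : MulChar F ℂ) θ ≠ 0 := by rw [hg1]; norm_num
  have hone : (1 : MulChar F ℂ) (-1) = 1 := MulChar.one_apply (IsUnit.neg isUnit_one)
  have hden : (gaussSum φ θ * gaussSum φ θ) * (gaussSum φ θ * gaussSum φ θ)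
      = (Fintype.card F : ℂ) * (Fintype.card F : ℂ) := by
    rw [hgφ2]
    linear_combination ((Fintype.card F : ℂ) * (Fintype.card F : ℂ)) * sq1 φ
  set t : MulChar F ℂ → ℂ := fun χ =>
    gaussSum χ θ / gaussSum 1 θ *
        (gaussSum (φ * χ) θ / gaussSum φ θ * (gaussSum (φ * χ) θ / gaussSum φ θ)) *
        (gaussSum (φ * χ)⁻¹ θ / gaussSum φ⁻¹ θ * (gaussSum (φ * χ)⁻¹ θ / gaussSum φ⁻¹ θ)) *
        gaussSum χ⁻¹ θ * χ (-1) ^ ((Nat.succ 0).succ + 1) with ht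
  rw [hypF]
  simp only [Fin.prod_univ_succ, Fin.prod_univ_zero, Matrix.cons_val_zero, Matrix.cons_val_succ,
    one_mul, mul_one, map_one]
  rw [show (∑ χ : MulChar F ℂ,
      gaussSum χ θ / gaussSum 1 θ * (gaussSum (φ * χ) θ / gaussSum φ θ * (gaussSum (φ * χ) θ / gaussSum φ θ)) *
            (gaussSum (φ * χ)⁻¹ θ / gaussSum φ⁻¹ θ * (gaussSum (φ * χ)⁻¹ θ / gaussSum φ⁻¹ θ)) *
          gaussSum χ⁻¹ θ * χ (-1) ^ ((Nat.succ 0).succ + 1)) = ∑ χ : MulChar F ℂ, t χ from rfl]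
  -- value at 1
  have ht1 : t 1 = -1 := by
    rw [ht]
    simp only [mul_one, inv_one, hφinv, hone, div_self hgφ0, div_self hg1ne, one_pow, hg1]
    norm_num
  -- value at φ
  have htφ : t φ = -1 / (Fintype.card F : ℂ) := by
    rw [ht]
    simp only [hφinv, hφφ, inv_one, hg1]
    set g := gaussSum φ θ
    set u := φ (-1) with hu'
    have hpow : u ^ ((Nat.succ 0).succ + 1) = u * u * u := by ring
    rw [hpow]
    have husq : u * u = 1 := sq1 φ
    have hnum : (g * g) * ((u * u) * u) = (Fintype.card F : ℂ) := by
      rw [hgφ2]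
      linear_combination ((Fintype.card F : ℂ) * (u * u + 1)) * husq
    calc g / -1 * (-1 / g * (-1 / g)) * (-1 / g * (-1 / g)) * g * (u * u * u)
        = -((g * g) * ((u * u) * u)) / ((g * g) * (g * g)) := by
          field_simp
          try ring
          try tauto
      _ = -(Fintype.card F : ℂ) / ((Fintype.card F : ℂ) * (Fintype.card F : ℂ)) := by
          rw [hnum, hden]
      _ = -1 / (Fintype.card F : ℂ) := by
          field_simp
          try ring
          try tauto
  -- generic value
  have htgen : ∀ χ : MulChar F ℂ, χ ≠ 1 → χ ≠ φ → t χ = -(Fintype.card F : ℂ) := by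
    intro χ hχ1 hχφ
    have hφχ : φ * χ ≠ 1 := by
      intro h
      exact hχφ ((eq_inv_of_mul_eq_one_right h).trans hφinv)
    have hab := pair χ hχ1
    have hcd := pair (φ * χ) hφχ
    rw [MulChar.mul_apply] at hcd
    rw [ht]
    simp only [hφinv, hg1]
    set a := gaussSum χ θ
    set b := gaussSum χ⁻¹ θ
    set c := gaussSum (φ * χ) θ
    set d := gaussSum (φ * χ)⁻¹ θ
    set g := gaussSum φ θ
    set u := χ (-1) with hu'
    set v := φ (-1) with hv'
    have hu : u * u = 1 := sq1 χ
    have hv : v * v = 1 := sq1 φ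
    have hpow : u ^ ((Nat.succ 0).succ + 1) = u * u * u := by ring
    rw [hpow]
    have hnum : (a * b) * ((c * d) * (c * d)) * ((u * u) * u)
        = (Fintype.card F : ℂ) * ((Fintype.card F : ℂ) * (Fintype.card F : ℂ)) := by
      rw [hab, hcd]
      linear_combination (v * v * (u * u * u * u + u * u + 1) *
        ((Fintype.card F : ℂ) * (Fintype.card F : ℂ) * (Fintype.card F : ℂ))) * hu +
        ((Fintype.card F : ℂ) * (Fintype.card F : ℂ) * (Fintype.card F : ℂ)) * hv
    calc a / -1 * (c / g * (c / g)) * (d / g * (d / g)) * b * (u * u * u)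
        = -((a * b) * ((c * d) * (c * d)) * ((u * u) * u)) / ((g * g) * (g * g)) := by
          field_simp
          try ring
          try tauto
      _ = -((Fintype.card F : ℂ) * ((Fintype.card F : ℂ) * (Fintype.card F : ℂ))) /
            ((Fintype.card F : ℂ) * (Fintype.card F : ℂ)) := by rw [hnum, hden]
      _ = -(Fintype.card F : ℂ) := by
          field_simp
          try ring
          try tauto
  -- split the sum
  have hone_ne : (1 : MulChar F ℂ) ≠ φ := fun h => hφ' h.symm
  have hsub : ({1, φ} : Finset (MulChar F ℂ)) ⊆ Finset.univ := Finset.subset_univ _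
  rw [← Finset.sum_sdiff hsub, Finset.sum_pair hone_ne, ht1, htφ]
  have hconst : ∀ χ ∈ Finset.univ \ ({1, φ} : Finset (MulChar F ℂ)),
      t χ = -(Fintype.card F : ℂ) := by
    intro χ hχ
    simp only [Finset.mem_sdiff, Finset.mem_insert, Finset.mem_singleton, not_or] at hχ
    exact htgen χ hχ.2.1 hχ.2.2
  rw [Finset.sum_congr rfl hconst, Finset.sum_const]
  haveI : NeZero ((Monoid.exponent Fˣ : ℂ)) :=
    ⟨Nat.cast_ne_zero.mpr Monoid.exponent_ne_zero_of_finite⟩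
  have hcardMC : Fintype.card (MulChar F ℂ) = Fintype.card F - 1 := by
    rw [← Nat.card_eq_fintype_card, MulChar.card_eq_card_units_of_hasEnoughRootsOfUnity F ℂ,
      Nat.card_eq_fintype_card, Fintype.card_units]
  have hcard2 : (Finset.univ \ ({1, φ} : Finset (MulChar F ℂ))).card = Fintype.card F - 3 := by
    rw [Finset.card_sdiff_of_subset hsub, Finset.card_pair hone_ne, Finset.card_univ, hcardMC]
    omega
  rw [hcard2, nsmul_eq_mul]
  have hcast : ((Fintype.card F - 3 : ℕ) : ℂ) = (Fintype.card F : ℂ) - 3 := by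
    rw [Nat.cast_sub hq3]; norm_num
  rw [hcast]
  field_simp
  ring
end

section
/- (Vanishing of well-poised functions at non-squares) For every n ≥ 0 and multiplicative characters A_0, A_1, ..., A_n of F_q such that A_0 is not a square of any multiplicative character: (n+1)F_n*(A_0,A_1,...,A_n; A_0Ā_1,...,A_0Ā_n | (-1)^n)_q = 0. -/
lemma mulChar_neg_one_of_not_isSquare {F : Type*} [Field F] [Fintype F] {A : MulChar F ℂ}
    (hA : ¬ IsSquare A) : A (-1) = -1 := by
  rcases Nat.even_or_odd (Nat.card (MulChar F ℂ)) with hc | hc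
  swap
  · -- odd card: everything is a square, contradiction
    obtain ⟨m, hm⟩ := hc
    exact absurd ⟨A ^ (m + 1), by
      rw [← pow_add]
      have : m + 1 + (m + 1) = Nat.card (MulChar F ℂ) + 1 := by omega
      rw [this, pow_succ, pow_card_eq_one', one_mul]⟩ hA
  obtain ⟨e⟩ := MulChar.mulEquiv_units F ℂ
  haveI : IsCyclic (MulChar F ℂ) := isCyclic_of_surjective e.symm e.symm.surjective
  have hcard : Nat.card (MulChar F ℂ) = Nat.card Fˣ :=
    MulChar.card_eq_card_units_of_hasEnoughRootsOfUnity F ℂ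
  have hm1 : (-1 : F) ≠ 1 := by
    intro h
    have h2 : ringChar F = 2 := neg_one_eq_one_iff.mp h
    have hq : Fintype.card F % 2 = 0 := FiniteField.even_card_iff_char_two.mp h2
    have hq2 : 2 ≤ Fintype.card F := Fintype.one_lt_card
    have hu : Nat.card Fˣ = Nat.card F - 1 := Nat.card_units F
    rw [Nat.card_eq_fintype_card (α := F)] at hu
    rw [hcard, hu] at hc
    rw [Nat.even_iff] at hc
    omega
  obtain ⟨γ, hγ⟩ := IsCyclic.exists_generator (α := MulChar F ℂ)
  obtain ⟨k, hk⟩ := (mem_powers_iff_mem_zpowers).mpr (hγ A)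
  have hkodd : Odd k := by
    rcases Nat.even_or_odd k with he | ho
    · obtain ⟨j, hj⟩ := he
      exact absurd ⟨γ ^ j, by simp only [← hk, hj, pow_add]⟩ hA
    · exact ho
  have hsq : γ (-1) * γ (-1) = 1 := by
    rw [← map_mul, neg_mul_neg, one_mul, map_one]
  have hne : γ (-1) ≠ 1 := by
    intro h
    obtain ⟨χ, hχ⟩ := MulChar.exists_apply_ne_one_of_hasEnoughRootsOfUnity F ℂ hm1
    obtain ⟨l, hl⟩ := (mem_powers_iff_mem_zpowers).mpr (hγ χ)
    apply hχ
    rw [← hl]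
    rcases Nat.eq_zero_or_pos l with rfl | hl0
    · exact MulChar.one_apply (isUnit_one.neg)
    · rw [MulChar.pow_apply' _ hl0.ne', h, one_pow]
  have hγm1 : γ (-1) = -1 := (mul_self_eq_one_iff.mp hsq).resolve_left hne
  rw [← hk, MulChar.pow_apply' _ hkodd.pos.ne', hγm1, hkodd.neg_one_pow]

/-- A well-poised `ₙ₊₁Fₙ*(⋯ | (-1)ⁿ)` vanishes when the leading parameter is not a square. -/
theorem hypF_well_poised_eq_zero_of_not_isSquare {F : Type*} [Field F] [Fintype F]
    (θ : AddChar F ℂ) (hθ : θ ≠ 1) (n : ℕ) (A : Fin (n + 1) → MulChar F ℂ)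
    (hA : ¬ IsSquare (A 0)) :
    hypF θ A (fun j : Fin n => A 0 * (A j.succ)⁻¹) ((-1 : F) ^ n) = 0 := by
  have hA1 : A 0 (-1) = -1 := mulChar_neg_one_of_not_isSquare hA
  set B : Fin n → MulChar F ℂ := fun j => A 0 * (A j.succ)⁻¹ with hB
  set T : MulChar F ℂ → ℂ := fun χ =>
    (∏ i, gaussSum (A i * χ) θ / gaussSum (A i) θ) *
      (∏ j, gaussSum (B j * χ)⁻¹ θ / gaussSum (B j)⁻¹ θ) *
      gaussSum χ⁻¹ θ * (χ (-1)) ^ (n + 1) * χ ((-1 : F) ^ n) with hT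
  have key : ∀ χ : MulChar F ℂ, T ((A 0 * χ)⁻¹) = - T χ := by
    intro χ
    have e0 : A 0 * (A 0 * χ)⁻¹ = χ⁻¹ := by
      rw [mul_inv_rev, mul_comm χ⁻¹, mul_inv_cancel_left]
    have e1 : ∀ j : Fin n, A j.succ * (A 0 * χ)⁻¹ = (B j * χ)⁻¹ := by
      intro j
      simp only [hB, mul_inv_rev, inv_inv]
      simp [mul_comm, mul_left_comm, mul_assoc]
    have e2 : ∀ j : Fin n, (B j * (A 0 * χ)⁻¹)⁻¹ = A j.succ * χ := by
      intro j
      simp only [hB, mul_inv_rev, inv_inv]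
      simp [mul_comm, mul_left_comm, mul_assoc, mul_inv_cancel_left, inv_mul_cancel_left]
    have e3 : ((A 0 * χ)⁻¹)⁻¹ = A 0 * χ := inv_inv _
    have hsq : χ (-1) * χ (-1) = 1 := by
      rw [← map_mul, neg_mul_neg, one_mul, map_one]
    have hpsi : (A 0 * χ)⁻¹ (-1) = - χ (-1) := by
      rw [MulChar.inv_apply', inv_neg, inv_one, MulChar.mul_apply, hA1, neg_one_mul]
    have hch : ((A 0 * χ)⁻¹ (-1)) ^ (n + 1) * (A 0 * χ)⁻¹ ((-1 : F) ^ n)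
        = -((χ (-1)) ^ (n + 1) * χ ((-1 : F) ^ n)) := by
      rw [map_pow, map_pow, hpsi, ← pow_add, ← pow_add]
      have h2 : ∀ m : ℕ, χ (-1) ^ (2 * m + 1) = χ (-1) := by
        intro m
        rw [pow_succ, pow_mul, pow_two, hsq, one_pow, one_mul]
      have hn : n + 1 + n = 2 * n + 1 := by ring
      rw [hn, neg_pow, h2, Odd.neg_one_pow ⟨n, by ring⟩, neg_one_mul]
    have hGS :
        (∏ i, gaussSum (A i * (A 0 * χ)⁻¹) θ / gaussSum (A i) θ) *
            (∏ j, gaussSum (B j * (A 0 * χ)⁻¹)⁻¹ θ / gaussSum (B j)⁻¹ θ) *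
            gaussSum ((A 0 * χ)⁻¹)⁻¹ θ
          = (∏ i, gaussSum (A i * χ) θ / gaussSum (A i) θ) *
              (∏ j, gaussSum (B j * χ)⁻¹ θ / gaussSum (B j)⁻¹ θ) *
              gaussSum χ⁻¹ θ := by
      rw [Fin.prod_univ_succ, Fin.prod_univ_succ
        (f := fun i => gaussSum (A i * χ) θ / gaussSum (A i) θ)]
      simp only [e0, e1, e2, e3]
      simp only [div_eq_mul_inv, Finset.prod_mul_distrib, Finset.prod_inv_distrib]
      ring
    calc T ((A 0 * χ)⁻¹)
        = ((∏ i, gaussSum (A i * (A 0 * χ)⁻¹) θ / gaussSum (A i) θ) *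
            (∏ j, gaussSum (B j * (A 0 * χ)⁻¹)⁻¹ θ / gaussSum (B j)⁻¹ θ) *
            gaussSum ((A 0 * χ)⁻¹)⁻¹ θ) *
            (((A 0 * χ)⁻¹ (-1)) ^ (n + 1) * (A 0 * χ)⁻¹ ((-1 : F) ^ n)) := by
          rw [hT]; ring
      _ = ((∏ i, gaussSum (A i * χ) θ / gaussSum (A i) θ) *
            (∏ j, gaussSum (B j * χ)⁻¹ θ / gaussSum (B j)⁻¹ θ) *
            gaussSum χ⁻¹ θ) * (-((χ (-1)) ^ (n + 1) * χ ((-1 : F) ^ n))) := by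
          rw [hGS, hch]
      _ = - T χ := by rw [hT]; ring
  have hbij : Function.Bijective (fun χ : MulChar F ℂ => (A 0 * χ)⁻¹) := by
    constructor
    · intro x y h
      simpa using inv_injective h
    · intro y
      refine ⟨(A 0)⁻¹ * y⁻¹, ?_⟩
      show (A 0 * ((A 0)⁻¹ * y⁻¹))⁻¹ = y
      rw [mul_inv_cancel_left, inv_inv]
  have hS : ∑ χ : MulChar F ℂ, T χ = 0 := by
    have h1 : ∑ χ : MulChar F ℂ, T ((A 0 * χ)⁻¹) = ∑ χ : MulChar F ℂ, T χ :=
      Function.Bijective.sum_comp hbij T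
    have h2 : ∑ χ : MulChar F ℂ, T ((A 0 * χ)⁻¹) = - ∑ χ : MulChar F ℂ, T χ := by
      rw [← Finset.sum_neg_distrib]
      exact Finset.sum_congr rfl fun χ _ => key χ
    have h3 : (∑ χ : MulChar F ℂ, T χ) = - ∑ χ : MulChar F ℂ, T χ := h1.symm.trans h2
    exact add_self_eq_zero.mp (eq_neg_iff_add_eq_zero.mp h3)
  have hdef : hypF θ A B ((-1:F)^n) =
      (1 / ((Fintype.card F : ℂ) - 1)) * ∑ χ : MulChar F ℂ, T χ := rfl
  rw [hdef, hS, mul_zero]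
end
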